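/- Let $\ell$ be a prime, $q$ a prime power not divisible by $\ell$, $n \geq 2$ the multiplicative order of $q$ modulo $\ell$, with $n < \ell$, and $r = \mathrm{ord}_\ell(q^n-1)$. Let $k$ be a finite field of characteristic $\ell$. Then in $k[X]$, the polynomial $g(X) = X + X^q + \cdots + X^{q^{n-1}} - n$ is divisible by $(X-1)^n$ but not by $(X-1)^{n+1}$. -/

import Mathlib

open Polynomial in
private lemma sum_descFact_aux {n : ℕ} (k : Type*) [Field k] (Q : k)
    (hQ : orderOf Q = n) (hn : 0 < n) (i : ℕ) (hi1 : 1 ≤ i) (hin : i ≤ n) :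
    (∑ j ∈ Finset.range n, (descPochhammer k i).eval (Q ^ j)) =
      if i = n then (n : k) else 0 := by
  have hQn : Q ^ n = 1 := by rw [← hQ]; exact pow_orderOf_eq_one Q
  have hS : ∀ m : ℕ, (∑ j ∈ Finset.range n, (Q ^ m) ^ j) =
      if n ∣ m then (n : k) else 0 := by
    intro m
    by_cases hd : n ∣ m
    · have h1 : Q ^ m = 1 := by
        rw [← hQ] at hd; exact orderOf_dvd_iff_pow_eq_one.mp hd
      simp [h1, hd]
    · have h1 : Q ^ m ≠ 1 := by
        intro h
        exact hd (hQ ▸ orderOf_dvd_iff_pow_eq_one.mpr h)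
      rw [geom_sum_eq h1, if_neg hd]
      have : (Q ^ m) ^ n = 1 := by rw [← pow_mul, mul_comm, pow_mul, hQn, one_pow]
      rw [this, sub_self, zero_div]
  have hdeg : (descPochhammer k i).natDegree < i + 1 := by
    rw [descPochhammer_natDegree]; omega
  calc (∑ j ∈ Finset.range n, (descPochhammer k i).eval (Q ^ j))
      = ∑ j ∈ Finset.range n, ∑ m ∈ Finset.range (i + 1),
          (descPochhammer k i).coeff m * (Q ^ j) ^ m := by
        refine Finset.sum_congr rfl fun j _ => ?_
        exact eval_eq_sum_range' hdeg _
    _ = ∑ m ∈ Finset.range (i + 1),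
          (descPochhammer k i).coeff m * ∑ j ∈ Finset.range n, (Q ^ m) ^ j := by
        rw [Finset.sum_comm]
        refine Finset.sum_congr rfl fun m _ => ?_
        rw [Finset.mul_sum]
        refine Finset.sum_congr rfl fun j _ => ?_
        rw [← pow_mul, mul_comm j m, pow_mul]
    _ = if i = n then (n : k) else 0 := by
        by_cases hin' : i = n
        · subst hin'
          rw [if_pos rfl, Finset.sum_eq_single i]
          · rw [hS, if_pos dvd_rfl]
            have : (descPochhammer k i).coeff i = 1 := by
              have := (monic_descPochhammer k i).leadingCoeff
              rwa [leadingCoeff, descPochhammer_natDegree] at this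
            rw [this, one_mul]
          · intro m hm hmi
            rw [hS]
            rcases Nat.eq_zero_or_pos m with rfl | hm0
            · rw [coeff_zero_eq_eval_zero, descPochhammer_eval_zero,
                if_neg (by omega), zero_mul]
            · rw [if_neg, mul_zero]
              intro hd
              have := Nat.le_of_dvd hm0 hd
              have := Finset.mem_range.mp hm
              omega
          · intro h; exact absurd (Finset.self_mem_range_succ i) h
        · rw [if_neg hin']
          refine Finset.sum_eq_zero fun m hm => ?_
          rcases Nat.eq_zero_or_pos m with rfl | hm0
          · rw [coeff_zero_eq_eval_zero, descPochhammer_eval_zero,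
              if_neg (by omega), zero_mul]
          · rw [hS, if_neg, mul_zero]
            intro hd
            have := Nat.le_of_dvd hm0 hd
            have := Finset.mem_range.mp hm
            omega

open Polynomial in
theorem stmt_7 (ℓ q n r : ℕ) (hℓ : ℓ.Prime) (hq : IsPrimePow q) (hndvd : ¬ ℓ ∣ q)
    (hn : orderOf (q : ZMod ℓ) = n) (h2n : 2 ≤ n) (hnℓ : n < ℓ)
    (hr : r = padicValNat ℓ (q ^ n - 1))
    (k : Type*) [Field k] [Fintype k] (hchar : CharP k ℓ) :
    ((X : k[X]) - 1) ^ n ∣ (∑ j ∈ Finset.range n, (X : k[X]) ^ q ^ j - C (n : k)) ∧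
    ¬ ((X : k[X]) - 1) ^ (n + 1) ∣ (∑ j ∈ Finset.range n, (X : k[X]) ^ q ^ j - C (n : k)) := by
  haveI := hchar
  haveI : Fact ℓ.Prime := ⟨hℓ⟩
  have hn0 : 0 < n := by omega
  -- order of q in k
  have hQ : orderOf ((q : ℕ) : k) = n := by
    have hcast : ((q : ℕ) : k) = (ZMod.castHom dvd_rfl k) ((q : ℕ) : ZMod ℓ) := by
      simp [map_natCast]
    have h1 : orderOf ((ZMod.castHom dvd_rfl k).toMonoidHom ((q : ℕ) : ZMod ℓ)) =
        orderOf ((q : ℕ) : ZMod ℓ) :=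
      orderOf_injective _ (ZMod.castHom dvd_rfl k).injective _
    simp only [RingHom.toMonoidHom_eq_coe, MonoidHom.coe_coe] at h1
    rw [hcast, h1, hn]
  -- factorials up to n are nonzero in k
  have hfact : ∀ i : ℕ, i ≤ n → ((i.factorial : ℕ) : k) ≠ 0 := by
    intro i hi
    rw [Ne, CharP.cast_eq_zero_iff k ℓ]
    intro hd
    have := (Nat.Prime.dvd_factorial hℓ).mp hd
    omega
  have hnne : ((n : ℕ) : k) ≠ 0 := by
    rw [Ne, CharP.cast_eq_zero_iff k ℓ]
    intro hd
    have := Nat.le_of_dvd hn0 hd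
    omega
  -- sum of binomial coefficients
  have hchoose : ∀ i : ℕ, 1 ≤ i → i ≤ n →
      (i.factorial : k) * (∑ j ∈ Finset.range n, (((q ^ j).choose i : ℕ) : k)) =
        if i = n then (n : k) else 0 := by
    intro i hi1 hin
    rw [Finset.mul_sum]
    have : ∀ j ∈ Finset.range n, (i.factorial : k) * (((q ^ j).choose i : ℕ) : k)
        = (descPochhammer k i).eval ((((q : ℕ) : k)) ^ j) := by
      intro j _
      rw [← Nat.cast_pow, descPochhammer_eval_eq_descFactorial,
        Nat.descFactorial_eq_factorial_mul_choose, Nat.cast_mul]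
    rw [Finset.sum_congr rfl this]
    exact sum_descFact_aux k _ hQ hn0 i hi1 hin
  set g : k[X] := (∑ j ∈ Finset.range n, (X : k[X]) ^ q ^ j - C (n : k)) with hg
  set h : k[X] := (∑ j ∈ Finset.range n, ((X : k[X]) + 1) ^ q ^ j - C (n : k)) with hh
  -- coefficients of h
  have hcoeff : ∀ i : ℕ, h.coeff i =
      (∑ j ∈ Finset.range n, (((q ^ j).choose i : ℕ) : k)) -
        (if i = 0 then (n : k) else 0) := by
    intro i
    rw [hh, coeff_sub, finset_sum_coeff]
    congr 1
    · exact Finset.sum_congr rfl fun j _ => coeff_X_add_one_pow k _ _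
    · exact coeff_C
  have hz : ∀ i < n, h.coeff i = 0 := by
    intro i hi
    rw [hcoeff]
    rcases Nat.eq_zero_or_pos i with rfl | hi0
    · simp
    · rw [if_neg (by omega), sub_zero]
      have := hchoose i hi0 (le_of_lt hi)
      rw [if_neg (by omega)] at this
      exact (mul_eq_zero.mp this).resolve_left (hfact i (le_of_lt hi))
  have hnz : h.coeff n ≠ 0 := by
    rw [hcoeff, if_neg (by omega), sub_zero]
    intro h0
    have := hchoose n (by omega) le_rfl
    rw [if_pos rfl, h0, mul_zero] at this
    exact hnne this.symm
  -- relation between g and h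
  have hgh : g = h.comp (X - C 1) := by
    rw [hg, hh, sub_comp, C_comp]
    congr 1
    rw [comp, eval₂_finset_sum]
    refine Finset.sum_congr rfl fun j _ => ?_
    rw [eval₂_pow, eval₂_add, eval₂_X, eval₂_one]
    simp
  have hhg : h = g.comp (X + C 1) := by
    rw [hg, hh, sub_comp, C_comp]
    congr 1
    rw [comp, eval₂_finset_sum]
    refine Finset.sum_congr rfl fun j _ => ?_
    rw [eval₂_pow, eval₂_X]
    simp
  constructor
  · obtain ⟨u, hu⟩ := (X_pow_dvd_iff).mpr hz
    refine ⟨u.comp (X - C 1), ?_⟩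
    rw [hgh, hu, mul_comp, pow_comp, X_comp]
    norm_num
  · rintro ⟨v, hv⟩
    have : (X : k[X]) ^ (n + 1) ∣ h := by
      refine ⟨v.comp (X + C 1), ?_⟩
      rw [hhg, hv, mul_comp, pow_comp, sub_comp, X_comp, one_comp]
      norm_num
    exact hnz (X_pow_dvd_iff.mp this n (by omega))
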